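/- Let H be a real Hilbert space, let b : H × H → ℝ be a bilinear form, and let C ≥ 0 satisfy |b(x, y)| ≤ C‖x‖‖y‖ for all x, y ∈ H. Let X_h and Y_h be subspaces of H, let β > 0, and let ε ≥ 0 with ε·C < 1. Assume that for every x_h ∈ X_h with ‖x_h‖ = 1 there exist y ∈ H and y_h ∈ Y_h such that (i) ⟨x_h, z⟩ = b(z, y) for all z ∈ H, (ii) ‖y‖ ≤ 1/β, and (iii) ‖y − y_h‖ ≤ ε. Then for every x_h ∈ X_h with ‖x_h‖ = 1 one has sup{ b(x_h, y_h) / ‖y_h‖ : y_h ∈ Y_h, y_h ≠ 0 } ≥ β(1 − εC)/(1 + εβ); in particular the discrete inf-sup constant inf over unit x_h ∈ X_h of this supremum is at least β(1 − εC)/(1 + εβ). -/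

import Mathlib

/-- The abstract stability argument of Subsection 1.4 (inequality (1.10)):
if each unit vector `x_h ∈ X_h` admits a dual solution `y` with
`⟨x_h, z⟩ = b(z, y)` for all `z`, `‖y‖ ≤ 1/β`, and a discrete approximation
`y_h ∈ Y_h` with `‖y - y_h‖ ≤ ε`, then the discrete inf-sup constant is at
least `β(1 - εC)/(1 + εβ)`. -/
theorem abstract_discrete_infsup
    {H : Type*} [NormedAddCommGroup H] [InnerProductSpace ℝ H] [CompleteSpace H]
    (b : H →ₗ[ℝ] H →ₗ[ℝ] ℝ) (C : ℝ) (hC : 0 ≤ C)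
    (hb : ∀ x y : H, |b x y| ≤ C * ‖x‖ * ‖y‖)
    (Xh Yh : Submodule ℝ H) (β ε : ℝ) (hβ : 0 < β) (hε : 0 ≤ ε)
    (hεC : ε * C < 1)
    (hdual : ∀ xh ∈ Xh, ‖xh‖ = 1 → ∃ y : H, ∃ yh ∈ Yh,
      (∀ z : H, (inner ℝ xh z : ℝ) = b z y) ∧ ‖y‖ ≤ 1 / β ∧ ‖y - yh‖ ≤ ε) :
    ∀ xh ∈ Xh, ‖xh‖ = 1 →
      β * (1 - ε * C) / (1 + ε * β) ≤
        sSup {r : ℝ | ∃ yh ∈ Yh, yh ≠ 0 ∧ r = b xh yh / ‖yh‖} := by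
  intro xh hxhX hxh
  obtain ⟨y, yh, hyhY, hdy, hynorm, happrox⟩ := hdual xh hxhX hxh
  -- b xh y = 1
  have h1 : b xh y = 1 := by
    have := hdy xh
    rw [real_inner_self_eq_norm_sq, hxh] at this
    linarith
  -- |b xh (y - yh)| ≤ ε * C
  have h2 : |b xh (y - yh)| ≤ ε * C := by
    have := hb xh (y - yh)
    rw [hxh] at this
    calc |b xh (y - yh)| ≤ C * 1 * ‖y - yh‖ := this
      _ ≤ C * 1 * ε := by
          exact mul_le_mul_of_nonneg_left happrox (by linarith)
      _ = ε * C := by ring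
  have hbyh : 1 - ε * C ≤ b xh yh := by
    have : b xh (y - yh) = b xh y - b xh yh := by simp
    have h3 : b xh (y - yh) ≤ ε * C := le_of_abs_le h2
    rw [this, h1] at h3
    linarith
  have hyh0 : yh ≠ 0 := by
    intro h
    rw [h] at hbyh
    simp at hbyh
    linarith
  have hyhpos : 0 < ‖yh‖ := norm_pos_iff.mpr hyh0
  have hyhnorm : ‖yh‖ ≤ (1 + ε * β) / β := by
    have : ‖yh‖ ≤ ‖y‖ + ‖y - yh‖ := by
      calc ‖yh‖ = ‖y - (y - yh)‖ := by rw [sub_sub_cancel]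
        _ ≤ ‖y‖ + ‖y - yh‖ := norm_sub_le _ _
    have : ‖yh‖ ≤ 1 / β + ε := by linarith
    calc ‖yh‖ ≤ 1 / β + ε := this
      _ = (1 + ε * β) / β := by field_simp
  -- the candidate value
  have hmem : b xh yh / ‖yh‖ ∈ {r : ℝ | ∃ yh ∈ Yh, yh ≠ 0 ∧ r = b xh yh / ‖yh‖} :=
    ⟨yh, hyhY, hyh0, rfl⟩
  have hbdd : BddAbove {r : ℝ | ∃ yh ∈ Yh, yh ≠ 0 ∧ r = b xh yh / ‖yh‖} := by
    refine ⟨C, ?_⟩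
    rintro r ⟨z, hz, hz0, rfl⟩
    have hzpos : 0 < ‖z‖ := norm_pos_iff.mpr hz0
    have := hb xh z
    rw [hxh] at this
    have hle : b xh z ≤ C * ‖z‖ := by
      have := le_abs_self (b xh z)
      nlinarith
    rw [div_le_iff₀ hzpos]
    linarith
  refine le_trans ?_ (le_csSup hbdd hmem)
  have hratio : β * (1 - ε * C) / (1 + ε * β) ≤ (1 - ε * C) / ‖yh‖ := by
    rw [div_le_div_iff₀ (by positivity) hyhpos]
    have h1εC : 0 ≤ 1 - ε * C := by linarith
    have := mul_le_mul_of_nonneg_left hyhnorm (mul_nonneg hβ.le h1εC)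
    calc β * (1 - ε * C) * ‖yh‖ ≤ β * (1 - ε * C) * ((1 + ε * β) / β) := this
      _ = (1 - ε * C) * (1 + ε * β) := by field_simp
  refine le_trans hratio ?_
  gcongr
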